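/- Let a ≥ 1 and n ≥ 1 with both a and n odd, and set ε = ⌊a/2⌋ = (a−1)/2. Then the center of the metallic cube Π^a_n consists of the single vertex ε̂ = εε⋯ε (the constant string of length n). -/

import Mathlib

/-- Strings of length `n` over the alphabet `{0,1,…,a}` in which the letter `a`
occurs only immediately after a `0` (i.e. `a` appears only inside blocks `0a`). -/
def MetallicOK (a n : ℕ) (α : Fin n → Fin (a + 1)) : Prop :=
  ∀ i : Fin n, (α i : ℕ) = a →
    ∃ j : Fin n, (j : ℕ) + 1 = (i : ℕ) ∧ (α j : ℕ) = 0

instance (a n : ℕ) : DecidablePred (MetallicOK a n) := fun α => by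
  unfold MetallicOK; infer_instance

/-- Vertices of the metallic cube `Π^a_n`. -/
abbrev MetallicVertex (a n : ℕ) : Type :=
  {α : Fin n → Fin (a + 1) // MetallicOK a n α}

/-- The metallic cube `Π^a_n`: two strings are adjacent iff `Σ_i |α_i - β_i| = 1`. -/
def metallicCube (a n : ℕ) : SimpleGraph (MetallicVertex a n) where
  Adj u v := (∑ i : Fin n, Nat.dist (u.1 i : ℕ) (v.1 i : ℕ)) = 1
  symm := by
    constructor
    intro u v h
    simpa [Nat.dist_comm] using h
  loopless := by
    constructor
    intro u h
    simp [Nat.dist_self] at h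

instance (a n : ℕ) : DecidableRel (metallicCube a n).Adj := fun u v =>
  inferInstanceAs (Decidable ((∑ i : Fin n, Nat.dist (u.1 i : ℕ) (v.1 i : ℕ)) = 1))

/-- The eccentricity of a vertex of the metallic cube: the maximum distance
from `v` to any vertex. -/
noncomputable def ecc (a n : ℕ) (v : MetallicVertex a n) : ℕ :=
  Finset.univ.sup fun u => (metallicCube a n).dist v u


/-! ### Auxiliary machinery -/

/-- ℓ¹ distance between vertices. -/
def dvert (a n : ℕ) (u v : MetallicVertex a n) : ℕ :=
  ∑ i : Fin n, Nat.dist (u.1 i : ℕ) (v.1 i : ℕ)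

open Finset in
lemma sum_split (n : ℕ) (F : Fin n → ℕ) (i : Fin n) :
    ∑ k, F k = F i + ∑ k ∈ univ.erase i, F k :=
  (Finset.add_sum_erase _ F (mem_univ i)).symm

/-- step lemma: from `u ≠ v` produce a neighbour of `u` strictly closer to `v`. -/
lemma step_lemma (a n : ℕ) (u v : MetallicVertex a n) (hne : u ≠ v) :
    ∃ u' : MetallicVertex a n, (metallicCube a n).Adj u u' ∧
      dvert a n u' v + 1 = dvert a n u v := by
  classical
  by_cases hdec : ∃ i : Fin n, (v.1 i : ℕ) < (u.1 i : ℕ)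
  · obtain ⟨i, hi⟩ := hdec
    have hui : 1 ≤ (u.1 i : ℕ) := Nat.one_le_iff_ne_zero.mpr (by omega)
    set x : Fin (a + 1) := ⟨(u.1 i : ℕ) - 1, by omega⟩ with hx
    have hxv : (x : ℕ) = (u.1 i : ℕ) - 1 := rfl
    refine ⟨⟨Function.update u.1 i x, ?_⟩, ?_, ?_⟩
    · intro k hk
      by_cases hki : k = i
      · rw [hki, Function.update_self] at hk
        rw [hxv] at hk
        have := (u.1 i).2
        omega
      · rw [Function.update_of_ne hki] at hk
        obtain ⟨j, hj1, hj2⟩ := u.2 k hk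
        refine ⟨j, hj1, ?_⟩
        have hji : j ≠ i := by
          intro h; subst h; omega
        rw [Function.update_of_ne hji]
        exact hj2
    · show (∑ k : Fin n, Nat.dist (u.1 k : ℕ) ((Function.update u.1 i x) k : ℕ)) = 1
      rw [sum_split n _ i, Function.update_self]
      have : ∑ k ∈ Finset.univ.erase i,
          Nat.dist (u.1 k : ℕ) ((Function.update u.1 i x) k : ℕ) = 0 := by
        apply Finset.sum_eq_zero
        intro k hk
        rw [Function.update_of_ne (Finset.ne_of_mem_erase hk)]
        exact Nat.dist_self _
      rw [this, hxv]
      simp [Nat.dist]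
      omega
    · show (∑ k : Fin n, Nat.dist ((Function.update u.1 i x) k : ℕ) (v.1 k : ℕ)) + 1
        = ∑ k : Fin n, Nat.dist (u.1 k : ℕ) (v.1 k : ℕ)
      rw [sum_split n (fun k => Nat.dist ((Function.update u.1 i x) k : ℕ) (v.1 k : ℕ)) i,
        sum_split n (fun k => Nat.dist (u.1 k : ℕ) (v.1 k : ℕ)) i]
      have hcongr : ∑ k ∈ Finset.univ.erase i,
          Nat.dist ((Function.update u.1 i x) k : ℕ) (v.1 k : ℕ)
          = ∑ k ∈ Finset.univ.erase i, Nat.dist (u.1 k : ℕ) (v.1 k : ℕ) := by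
        apply Finset.sum_congr rfl
        intro k hk
        rw [Function.update_of_ne (Finset.ne_of_mem_erase hk)]
      rw [hcongr, Function.update_self, hxv]
      have : Nat.dist ((u.1 i : ℕ) - 1) (v.1 i : ℕ) + 1 = Nat.dist (u.1 i : ℕ) (v.1 i : ℕ) := by
        simp [Nat.dist]; omega
      omega
  · push_neg at hdec
    have hinc : ∃ i : Fin n, (u.1 i : ℕ) < (v.1 i : ℕ) := by
      by_contra h
      push_neg at h
      apply hne
      apply Subtype.ext
      funext k
      exact Fin.ext (le_antisymm (hdec k) (h k))
    obtain ⟨i, hi⟩ := hinc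
    have hvi : (v.1 i : ℕ) ≤ a := by omega
    set x : Fin (a + 1) := ⟨(u.1 i : ℕ) + 1, by omega⟩ with hx
    have hxv : (x : ℕ) = (u.1 i : ℕ) + 1 := rfl
    refine ⟨⟨Function.update u.1 i x, ?_⟩, ?_, ?_⟩
    · intro k hk
      by_cases hki : k = i
      · rw [hki, Function.update_self] at hk
        rw [hxv] at hk
        have hva : (v.1 i : ℕ) = a := by omega
        obtain ⟨j, hj1, hj2⟩ := v.2 i hva
        have hji : j ≠ i := by intro h; subst h; omega
        refine ⟨j, by rw [hki]; exact hj1, ?_⟩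
        rw [Function.update_of_ne hji]
        have := hdec j
        omega
      · rw [Function.update_of_ne hki] at hk
        obtain ⟨j, hj1, hj2⟩ := u.2 k hk
        refine ⟨j, hj1, ?_⟩
        have hji : j ≠ i := by
          intro h
          subst h
          have hvk : (v.1 k : ℕ) = a := by
            have := hdec k
            have := (v.1 k).2
            omega
          obtain ⟨j', hj'1, hj'2⟩ := v.2 k hvk
          have : j' = j := Fin.ext (by omega)
          subst this
          omega
        rw [Function.update_of_ne hji]
        exact hj2
    · show (∑ k : Fin n, Nat.dist (u.1 k : ℕ) ((Function.update u.1 i x) k : ℕ)) = 1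
      rw [sum_split n _ i, Function.update_self]
      have : ∑ k ∈ Finset.univ.erase i,
          Nat.dist (u.1 k : ℕ) ((Function.update u.1 i x) k : ℕ) = 0 := by
        apply Finset.sum_eq_zero
        intro k hk
        rw [Function.update_of_ne (Finset.ne_of_mem_erase hk)]
        exact Nat.dist_self _
      rw [this, hxv]
      simp [Nat.dist]
    · show (∑ k : Fin n, Nat.dist ((Function.update u.1 i x) k : ℕ) (v.1 k : ℕ)) + 1
        = ∑ k : Fin n, Nat.dist (u.1 k : ℕ) (v.1 k : ℕ)
      rw [sum_split n (fun k => Nat.dist ((Function.update u.1 i x) k : ℕ) (v.1 k : ℕ)) i,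
        sum_split n (fun k => Nat.dist (u.1 k : ℕ) (v.1 k : ℕ)) i]
      have hcongr : ∑ k ∈ Finset.univ.erase i,
          Nat.dist ((Function.update u.1 i x) k : ℕ) (v.1 k : ℕ)
          = ∑ k ∈ Finset.univ.erase i, Nat.dist (u.1 k : ℕ) (v.1 k : ℕ) := by
        apply Finset.sum_congr rfl
        intro k hk
        rw [Function.update_of_ne (Finset.ne_of_mem_erase hk)]
      rw [hcongr, Function.update_self, hxv]
      have : Nat.dist ((u.1 i : ℕ) + 1) (v.1 i : ℕ) + 1 = Nat.dist (u.1 i : ℕ) (v.1 i : ℕ) := by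
        simp [Nat.dist]; omega
      omega

lemma dvert_triangle (a n : ℕ) (u x v : MetallicVertex a n) :
    dvert a n u v ≤ dvert a n u x + dvert a n x v := by
  unfold dvert
  rw [← Finset.sum_add_distrib]
  exact Finset.sum_le_sum fun i _ => Nat.dist.triangle_inequality _ _ _

lemma dvert_le_walk (a n : ℕ) (u v : MetallicVertex a n)
    (p : (metallicCube a n).Walk u v) : dvert a n u v ≤ p.length := by
  induction p with
  | nil => simp [dvert, Nat.dist_self]
  | @cons x y z h p ih =>
    have h1 : dvert a n x y = 1 := h
    have := dvert_triangle a n x y z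
    simp only [SimpleGraph.Walk.length_cons]
    omega

lemma reach_dist_le (a n : ℕ) : ∀ (N : ℕ) (u v : MetallicVertex a n), dvert a n u v ≤ N →
    (metallicCube a n).Reachable u v ∧ (metallicCube a n).dist u v ≤ dvert a n u v := by
  intro N
  induction N with
  | zero =>
    intro u v h
    have huv : u = v := by
      apply Subtype.ext
      funext k
      apply Fin.ext
      have h0 : dvert a n u v = 0 := by omega
      have := Finset.sum_eq_zero_iff.mp h0 k (Finset.mem_univ k)
      exact Nat.eq_of_dist_eq_zero this
    subst huv
    exact ⟨SimpleGraph.Reachable.refl _, by rw [SimpleGraph.dist_self]; exact Nat.zero_le _⟩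
  | succ N ih =>
    intro u v h
    by_cases he : u = v
    · subst he
      exact ⟨SimpleGraph.Reachable.refl _, by rw [SimpleGraph.dist_self]; exact Nat.zero_le _⟩
    · obtain ⟨u', hadj, hd⟩ := step_lemma a n u v he
      obtain ⟨hr, hle⟩ := ih u' v (by omega)
      refine ⟨hadj.reachable.trans hr, ?_⟩
      obtain ⟨p, hp⟩ := hr.exists_walk_length_eq_dist
      have := SimpleGraph.dist_le (SimpleGraph.Walk.cons hadj p)
      simp only [SimpleGraph.Walk.length_cons] at this
      omega

lemma dist_eq_dvert (a n : ℕ) (u v : MetallicVertex a n) :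
    (metallicCube a n).dist u v = dvert a n u v := by
  obtain ⟨hr, hle⟩ := reach_dist_le a n (dvert a n u v) u v le_rfl
  refine le_antisymm hle ?_
  obtain ⟨p, hp⟩ := hr.exists_walk_length_eq_dist
  calc dvert a n u v ≤ p.length := dvert_le_walk a n u v p
    _ = _ := hp

/-! ### List-level machinery -/

/-- validity predicate for lists -/
def okL (a : ℕ) (l : List ℕ) : Prop :=
  (∀ x ∈ l, x ≤ a) ∧
  ∀ i, (h : i < l.length) → l[i] = a →
    ∃ j, ∃ hj : j < l.length, j + 1 = i ∧ l[j] = 0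

def ldist (l1 l2 : List ℕ) : ℕ := (List.zipWith Nat.dist l1 l2).sum

lemma okL_append {a : ℕ} {l1 l2 : List ℕ} (h1 : okL a l1) (h2 : okL a l2) :
    okL a (l1 ++ l2) := by
  constructor
  · intro x hx
    rcases List.mem_append.mp hx with h | h
    · exact h1.1 x h
    · exact h2.1 x h
  · intro i h hi
    rw [List.length_append] at h
    by_cases hlt : i < l1.length
    · rw [List.getElem_append_left hlt] at hi
      obtain ⟨j, hj, hj1, hj2⟩ := h1.2 i hlt hi
      exact ⟨j, by rw [List.length_append]; omega, hj1,
        by rw [List.getElem_append_left hj]; exact hj2⟩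
    · push_neg at hlt
      have h2i : i - l1.length < l2.length := by omega
      rw [List.getElem_append_right hlt] at hi
      obtain ⟨j, hj, hj1, hj2⟩ := h2.2 (i - l1.length) h2i hi
      refine ⟨j + l1.length, by rw [List.length_append]; omega, by omega, ?_⟩
      rw [List.getElem_append_right (by omega)]
      simpa using hj2

lemma okL_nil (a : ℕ) : okL a [] := ⟨by simp, by simp⟩

lemma okL_single {a x : ℕ} (h : x < a) : okL a [x] := by
  refine ⟨by simpa using h.le, ?_⟩
  intro i hi hx
  simp at hi
  subst hi
  simp at hx
  omega

lemma okL_pair {a x y : ℕ} (hx : x < a) (hy : y < a) : okL a [x, y] :=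
  okL_append (okL_single hx) (okL_single hy)

lemma okL_zeroa {a : ℕ} (ha : 1 ≤ a) : okL a [0, a] := by
  refine ⟨by simp, ?_⟩
  intro i hi hx
  simp at hi
  interval_cases i
  · simp at hx; omega
  · exact ⟨0, by simp, by simp⟩

/-- the free choice for an unpaired coordinate -/
def cfree (a z : ℕ) : ℕ := if z < a / 2 then a - 1 else 0

lemma cfree_lt {a : ℕ} (ha : 1 ≤ a) (z : ℕ) : cfree a z < a := by
  unfold cfree; split <;> omega

lemma cfree_gain {a z : ℕ} (ha : 1 ≤ a) (hao : Odd a) (hz : z ≤ a) :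
    a / 2 ≤ Nat.dist z (cfree a z) ∧ (z ≠ a / 2 → a / 2 + 1 ≤ Nat.dist z (cfree a z)) := by
  obtain ⟨e, he⟩ := hao
  unfold cfree Nat.dist
  split <;> omega

lemma ldist_cons (p x : ℕ) (u w : List ℕ) :
    ldist (p :: u) (x :: w) = Nat.dist p x + ldist u w := by
  simp [ldist]

/-- Lemma A: any sequence admits a valid string at ℓ¹ distance at least `ε·m + ⌊m/2⌋`. -/
lemma lemA {a : ℕ} (ha : 1 ≤ a) (hao : Odd a) :
    ∀ (m : ℕ) (w : List ℕ), w.length ≤ m → (∀ x ∈ w, x ≤ a) →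
    ∃ u : List ℕ, u.length = w.length ∧ okL a u ∧
      (a / 2) * w.length + w.length / 2 ≤ ldist u w := by
  intro m
  induction m with
  | zero =>
    intro w hw _
    have : w = [] := List.length_eq_zero_iff.mp (by omega)
    subst this
    exact ⟨[], rfl, okL_nil a, by simp [ldist]⟩
  | succ m ih =>
    intro w hlen hbd
    match w with
    | [] => exact ⟨[], rfl, okL_nil a, by simp [ldist]⟩
    | [x] =>
      refine ⟨[cfree a x], rfl, okL_single (cfree_lt ha x), ?_⟩
      have := (cfree_gain ha hao (hbd x (by simp))).1
      simp [ldist, Nat.dist_comm]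
      omega
    | x :: y :: w' =>
      have hx : x ≤ a := hbd x (by simp)
      have hy : y ≤ a := hbd y (by simp)
      obtain ⟨u', hu'len, hu'ok, hu'd⟩ := ih w' (by simp at hlen ⊢; omega)
        (fun z hz => hbd z (by simp [hz]))
      obtain ⟨e, he⟩ := id hao
      by_cases hyx : y ≤ x
      · refine ⟨0 :: a :: u', by simp [hu'len], okL_append (okL_zeroa ha) hu'ok, ?_⟩
        rw [ldist_cons, ldist_cons]
        have h1 : Nat.dist 0 x = x := by simp [Nat.dist]
        have h2 : Nat.dist a y = a - y := by simp [Nat.dist]; omega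
        have hm : (a/2) * (x :: y :: w').length = (a/2) * w'.length + 2 * (a/2) := by
          simp; ring
        rw [hm, h1, h2]
        simp only [List.length_cons]
        omega
      · refine ⟨cfree a x :: cfree a y :: u', by simp [hu'len],
          okL_append (okL_pair (cfree_lt ha x) (cfree_lt ha y)) hu'ok, ?_⟩
        rw [ldist_cons, ldist_cons]
        have h1 := cfree_gain ha hao hx
        have h2 := cfree_gain ha hao hy
        have hne : x ≠ a/2 ∨ y ≠ a/2 := by omega
        have hm : (a/2) * (x :: y :: w').length = (a/2) * w'.length + 2 * (a/2) := by
          simp; ring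
        rw [hm]
        rcases hne with h | h
        · have := h1.2 h
          simp only [List.length_cons]
          rw [Nat.dist_comm x, Nat.dist_comm y] at *
          omega
        · have := h2.2 h
          simp only [List.length_cons]
          rw [Nat.dist_comm x, Nat.dist_comm y] at *
          omega

/-- Lemma B: a non-constant odd-length sequence admits a valid string at ℓ¹ distance
at least `ε·m + ⌊m/2⌋ + 1`. -/
lemma lemB {a : ℕ} (ha : 1 ≤ a) (hao : Odd a) :
    ∀ (m : ℕ) (w : List ℕ), w.length ≤ m → (∀ x ∈ w, x ≤ a) → Odd w.length →
    (∃ x ∈ w, x ≠ a / 2) →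
    ∃ u : List ℕ, u.length = w.length ∧ okL a u ∧
      (a / 2) * w.length + w.length / 2 + 1 ≤ ldist u w := by
  intro m
  induction m with
  | zero =>
    intro w hw _ hodd _
    exfalso
    have : w = [] := List.length_eq_zero_iff.mp (by omega)
    subst this
    simp at hodd
  | succ m ih =>
    intro w hlen hbd hodd hex
    match w with
    | [] => simp at hodd
    | [x] =>
      have hx : x ≤ a := hbd x (by simp)
      have hxe : x ≠ a / 2 := by simpa using hex
      refine ⟨[cfree a x], rfl, okL_single (cfree_lt ha x), ?_⟩
      have := (cfree_gain ha hao hx).2 hxe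
      simp [ldist, Nat.dist_comm]
      omega
    | x :: y :: w' =>
      have hx : x ≤ a := hbd x (by simp)
      have hy : y ≤ a := hbd y (by simp)
      have hmod : w'.length % 2 = 1 := by
        have h := Nat.odd_iff.mp hodd
        simp only [List.length_cons] at h
        omega
      obtain ⟨e, he⟩ := id hao
      have hea : a / 2 = e := by omega
      by_cases hxe : x = a / 2
      · by_cases hye : y = a / 2
        · have hw'ex : ∃ z ∈ w', z ≠ a / 2 := by
            rcases hex with ⟨z, hz, hzne⟩
            simp only [List.mem_cons] at hz
            rcases hz with h | h | h
            · exact absurd (h ▸ hxe) hzne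
            · exact absurd (h ▸ hye) hzne
            · exact ⟨z, h, hzne⟩
          obtain ⟨u', hu'len, hu'ok, hu'd⟩ := ih w' (by simp at hlen ⊢; omega)
            (fun z hz => hbd z (by simp [hz])) (Nat.odd_iff.mpr hmod) hw'ex
          refine ⟨0 :: a :: u', by simp [hu'len], okL_append (okL_zeroa ha) hu'ok, ?_⟩
          rw [ldist_cons, ldist_cons]
          have h1 : Nat.dist 0 x = x := by simp [Nat.dist]
          have h2 : Nat.dist a y = a - y := by simp [Nat.dist]; omega
          have hm : (a/2) * (x :: y :: w').length = (a/2) * w'.length + 2 * (a/2) := by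
            simp; ring
          rw [hm, h1, h2]
          simp only [List.length_cons]
          omega
        · by_cases hylt : y < a / 2
          · obtain ⟨u', hu'len, hu'ok, hu'd⟩ := lemA ha hao m w' (by simp at hlen ⊢; omega)
              (fun z hz => hbd z (by simp [hz]))
            refine ⟨0 :: a :: u', by simp [hu'len], okL_append (okL_zeroa ha) hu'ok, ?_⟩
            rw [ldist_cons, ldist_cons]
            have h1 : Nat.dist 0 x = x := by simp [Nat.dist]
            have h2 : Nat.dist a y = a - y := by simp [Nat.dist]; omega
            have hm : (a/2) * (x :: y :: w').length = (a/2) * w'.length + 2 * (a/2) := by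
              simp; ring
            rw [hm, h1, h2]
            simp only [List.length_cons]
            omega
          · have hygt : a / 2 < y := by omega
            match w' with
            | [] => simp [Nat.odd_iff] at hodd
            | z :: w'' =>
              have hz : z ≤ a := hbd z (by simp)
              have hmod'' : w''.length % 2 = 0 := by
                simp only [List.length_cons] at hmod
                omega
              obtain ⟨u'', hlen'', hok'', hd''⟩ := lemA ha hao m w''
                (by simp at hlen ⊢; omega) (fun t ht => hbd t (by simp [ht]))
              have hm : (a/2) * (x :: y :: z :: w'').length
                  = (a/2) * w''.length + 3 * (a/2) := by simp; ring
              by_cases hzy : z < y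
              · refine ⟨0 :: 0 :: a :: u'', by simp [hlen''],
                  okL_append (okL_single (by omega)) (okL_append (okL_zeroa ha) hok''), ?_⟩
                rw [ldist_cons, ldist_cons, ldist_cons]
                have h1 : Nat.dist 0 x = x := by simp [Nat.dist]
                have h2 : Nat.dist 0 y = y := by simp [Nat.dist]
                have h3 : Nat.dist a z = a - z := by simp [Nat.dist]; omega
                rw [hm, h1, h2, h3]
                simp only [List.length_cons]
                omega
              · have g1 := (cfree_gain ha hao hy).2 (by omega)
                have g2 := (cfree_gain ha hao hz).2 (by omega)
                refine ⟨0 :: cfree a y :: cfree a z :: u'', by simp [hlen''],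
                  okL_append (okL_single (by omega))
                    (okL_append (okL_pair (cfree_lt ha y) (cfree_lt ha z)) hok''), ?_⟩
                rw [ldist_cons, ldist_cons, ldist_cons]
                have h1 : Nat.dist 0 x = x := by simp [Nat.dist]
                rw [hm, h1, Nat.dist_comm _ y, Nat.dist_comm _ z]
                simp only [List.length_cons]
                omega
      · obtain ⟨u', hu'len, hu'ok, hu'd⟩ := lemA ha hao m (y :: w')
          (by simp at hlen ⊢; omega) (fun t ht => hbd t (by simp at ht ⊢; tauto))
        have g1 := (cfree_gain ha hao hx).2 hxe
        refine ⟨cfree a x :: u', by simp [hu'len],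
          okL_append (okL_single (cfree_lt ha x)) hu'ok, ?_⟩
        rw [ldist_cons]
        have hm : (a/2) * (x :: y :: w').length = (a/2) * (y :: w').length + (a/2) := by
          simp; ring
        rw [hm, Nat.dist_comm _ x]
        simp only [List.length_cons] at *
        omega

lemma ldist_eq_sum : ∀ (n : ℕ) (u w : List ℕ), u.length = n → w.length = n →
    ldist u w = ∑ i : Fin n, Nat.dist (u.getD i 0) (w.getD i 0) := by
  intro n
  induction n with
  | zero =>
    intro u w hu hw
    have : u = [] := List.length_eq_zero_iff.mp hu
    subst this
    simp [ldist]
  | succ n ih =>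
    intro u w hu hw
    cases u with
    | nil => simp at hu
    | cons p u2 =>
      cases w with
      | nil => simp at hw
      | cons x w2 =>
        simp only [List.length_cons] at hu hw
        rw [ldist_cons, ih u2 w2 (by omega) (by omega), Fin.sum_univ_succ]
        simp [List.getD_cons_succ, List.getD_cons_zero]

lemma exists_vertex_of_okL (a n : ℕ) (u : List ℕ) (hlen : u.length = n) (hok : okL a u) :
    ∃ U : MetallicVertex a n, ∀ i : Fin n, (U.1 i : ℕ) = u.getD i 0 := by
  have hbd : ∀ i : Fin n, u.getD i 0 < a + 1 := by
    intro i
    have hi : (i : ℕ) < u.length := by omega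
    rw [List.getD_eq_getElem u 0 hi]
    exact Nat.lt_succ_of_le (hok.1 _ (List.getElem_mem _))
  refine ⟨⟨fun i => ⟨u.getD i 0, hbd i⟩, ?_⟩, fun i => rfl⟩
  intro i hi
  simp only at hi
  have hilen : (i : ℕ) < u.length := by omega
  rw [List.getD_eq_getElem u 0 hilen] at hi
  obtain ⟨j, hj, hj1, hj2⟩ := hok.2 i hilen hi
  refine ⟨⟨j, by omega⟩, by simp [hj1], ?_⟩
  simp only
  rw [List.getD_eq_getElem u 0 (by simpa using hj)]
  exact hj2

lemma dvert_le_center (a n : ℕ) (ha : 1 ≤ a) (hao : Odd a)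
    (v : MetallicVertex a n) (hv : ∀ i : Fin n, (v.1 i : ℕ) = a / 2)
    (u : MetallicVertex a n) :
    dvert a n v u ≤ a / 2 * n + n / 2 := by
  classical
  obtain ⟨e, he⟩ := hao
  set S : Finset (Fin n) := Finset.univ.filter (fun i => (u.1 i : ℕ) = a) with hS
  have hmemS : ∀ i : Fin n, i ∈ S ↔ (u.1 i : ℕ) = a := by
    intro i; simp [hS]
  set f : Fin n → Fin n := fun i => ⟨(i : ℕ) - 1, lt_of_le_of_lt (Nat.sub_le _ _) i.2⟩ with hf
  have hfS : ∀ i ∈ S, ((u.1 (f i) : ℕ) = 0 ∧ 1 ≤ (i : ℕ)) := by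
    intro i hi
    obtain ⟨j, hj1, hj2⟩ := u.2 i ((hmemS i).mp hi)
    have : f i = j := Fin.ext (by simp [hf]; omega)
    rw [this]
    exact ⟨hj2, by omega⟩
  have hinj : Set.InjOn f S := by
    intro i hi j hj hij
    have h1 := (hfS i hi).2
    have h2 := (hfS j hj).2
    have := Fin.val_eq_val (f i) (f j) |>.mpr hij
    simp only [hf] at this
    exact Fin.ext (by omega)
  have hdisj : Disjoint S (S.image f) := by
    rw [Finset.disjoint_right]
    intro x hx hxS
    obtain ⟨i, hi, rfl⟩ := Finset.mem_image.mp hx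
    have h0 := (hfS i hi).1
    have ha' := (hmemS _).mp hxS
    omega
  have hcard2 : 2 * S.card ≤ n := by
    have h1 : (S ∪ S.image f).card = S.card + (S.image f).card :=
      Finset.card_union_of_disjoint hdisj
    have h2 : (S.image f).card = S.card := Finset.card_image_of_injOn hinj
    have h3 : (S ∪ S.image f).card ≤ Fintype.card (Fin n) := Finset.card_le_univ _
    simp [Fintype.card_fin] at h3
    omega
  have hcoord : ∀ i : Fin n, Nat.dist (v.1 i : ℕ) (u.1 i : ℕ)
      ≤ a / 2 + (if i ∈ S then 1 else 0) := by
    intro i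
    rw [hv i]
    have hub := (u.1 i).2
    by_cases hiS : i ∈ S
    · rw [if_pos hiS]
      have := (hmemS i).mp hiS
      unfold Nat.dist
      omega
    · rw [if_neg hiS]
      have hne : ¬((u.1 i : ℕ) = a) := fun h => hiS ((hmemS i).mpr h)
      unfold Nat.dist
      omega
  calc dvert a n v u ≤ ∑ i : Fin n, (a / 2 + (if i ∈ S then 1 else 0)) :=
        Finset.sum_le_sum fun i _ => hcoord i
    _ = a / 2 * n + S.card := by
        rw [Finset.sum_add_distrib]
        congr 1
        · simp [mul_comm]
        · simp [Finset.sum_ite_mem]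
    _ ≤ a / 2 * n + n / 2 := by omega

lemma ecc_eq_sup (a n : ℕ) (v : MetallicVertex a n) :
    ecc a n v = Finset.univ.sup (fun u => dvert a n v u) :=
  Finset.sup_congr rfl fun u _ => dist_eq_dvert a n v u

lemma getD_ofFn (n : ℕ) (f : Fin n → ℕ) (i : Fin n) : (List.ofFn f).getD i 0 = f i := by
  rw [List.getD_eq_getElem _ 0 (by simp), List.getElem_ofFn]

lemma ecc_ge_of_list (a n : ℕ) (v : MetallicVertex a n) (u : List ℕ)
    (hlen : u.length = n) (hok : okL a u) :
    ldist u (List.ofFn fun i => (v.1 i : ℕ)) ≤ ecc a n v := by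
  obtain ⟨U, hU⟩ := exists_vertex_of_okL a n u hlen hok
  rw [ecc_eq_sup]
  refine le_trans (le_of_eq ?_) (Finset.le_sup (Finset.mem_univ U))
  rw [ldist_eq_sum n u _ hlen List.length_ofFn]
  unfold dvert
  apply Finset.sum_congr rfl
  intro i _
  simp only [getD_ofFn]
  rw [hU i, Nat.dist_comm]

lemma ecc_lb (a n : ℕ) (ha : 1 ≤ a) (hao : Odd a) (v : MetallicVertex a n) :
    a / 2 * n + n / 2 ≤ ecc a n v := by
  set w := List.ofFn fun i : Fin n => (v.1 i : ℕ) with hw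
  have hwlen : w.length = n := List.length_ofFn
  have hbd : ∀ x ∈ w, x ≤ a := by
    intro x hx
    rw [hw, List.mem_ofFn] at hx
    obtain ⟨i, rfl⟩ := hx
    exact Nat.lt_succ_iff.mp (v.1 i).2
  obtain ⟨u, hulen, huok, hud⟩ := lemA ha hao n w (by omega) hbd
  have hge := ecc_ge_of_list a n v u (by omega) huok
  rw [← hw] at hge
  rw [hwlen] at hud
  omega

lemma ecc_lb1 (a n : ℕ) (ha : 1 ≤ a) (hao : Odd a) (hno : Odd n)
    (v : MetallicVertex a n) (hex : ∃ i : Fin n, (v.1 i : ℕ) ≠ a / 2) :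
    a / 2 * n + n / 2 + 1 ≤ ecc a n v := by
  set w := List.ofFn fun i : Fin n => (v.1 i : ℕ) with hw
  have hwlen : w.length = n := List.length_ofFn
  have hbd : ∀ x ∈ w, x ≤ a := by
    intro x hx
    rw [hw, List.mem_ofFn] at hx
    obtain ⟨i, rfl⟩ := hx
    exact Nat.lt_succ_iff.mp (v.1 i).2
  have hwex : ∃ x ∈ w, x ≠ a / 2 := by
    obtain ⟨i, hi⟩ := hex
    exact ⟨(v.1 i : ℕ), by rw [hw, List.mem_ofFn]; exact ⟨i, rfl⟩, hi⟩
  obtain ⟨u, hulen, huok, hud⟩ := lemB ha hao n w (by omega) hbd (by rw [hwlen]; exact hno) hwex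
  have hge := ecc_ge_of_list a n v u (by omega) huok
  rw [← hw] at hge
  rw [hwlen] at hud
  omega

/-- for `a` and `n` odd, the center of `Π^a_n` consists of the single
vertex `ε̂ = εε⋯ε` with `ε = ⌊a/2⌋ = (a−1)/2`: a vertex has minimum eccentricity iff
it is the constant string `ε̂`. -/
theorem metallic_center_odd_odd (a n : ℕ) (ha : 1 ≤ a) (hn : 1 ≤ n)
    (hao : Odd a) (hno : Odd n) :
    ∀ v : MetallicVertex a n,
      (∀ u : MetallicVertex a n, ecc a n v ≤ ecc a n u) ↔
        (∀ i : Fin n, (v.1 i : ℕ) = a / 2) := by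
  intro v
  have hepsok : MetallicOK a n (fun _ => ⟨a / 2, by omega⟩) := by
    intro i hi
    exfalso
    have h : a / 2 = a := hi
    omega
  set eps : MetallicVertex a n := ⟨fun _ => ⟨a / 2, by omega⟩, hepsok⟩ with heps
  have hub : ∀ z : MetallicVertex a n, (∀ i : Fin n, (z.1 i : ℕ) = a / 2) →
      ecc a n z ≤ a / 2 * n + n / 2 := by
    intro z hz
    rw [ecc_eq_sup]
    exact Finset.sup_le fun u _ => dvert_le_center a n ha hao z hz u
  constructor
  · intro hmin
    by_contra hne
    push_neg at hne
    obtain ⟨i, hi⟩ := hne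
    have h1 := ecc_lb1 a n ha hao hno v ⟨i, hi⟩
    have h2 := hmin eps
    have h3 := hub eps (fun _ => rfl)
    omega
  · intro hv u
    have h1 := hub v hv
    have h2 := ecc_lb a n ha hao u
    omega
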